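/- Let X be a complex Banach space, T a bounded linear operator on X with ‖T‖ ≤ 1, and P a bounded projection (P ∘ P = P) on X with ‖P‖ ≤ 1 and PT = TP = P. Assume T is uniformly P-ergodic. Then δ_P(T) = r(T − P) if and only if δ_P(Tⁿ) = (δ_P(T))ⁿ for all n ∈ ℕ, n ≥ 1. -/

import Mathlib

open Filter Topology

/-- The generalized Dobrushin ergodicity coefficient of `T` with respect to `P`:
`δ_P(T) = sup {‖T x‖ : P x = 0, ‖x‖ ≤ 1}`. -/
noncomputable def dobrushinCoeff {X : Type*} [NormedAddCommGroup X] [NormedSpace ℂ X]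
    (P T : X →L[ℂ] X) : ℝ :=
  sSup {r : ℝ | ∃ x : X, P x = 0 ∧ ‖x‖ ≤ 1 ∧ r = ‖T x‖}

section Aux

variable {X : Type*} [NormedAddCommGroup X] [NormedSpace ℂ X]

lemma dob_zero_mem (P S : X →L[ℂ] X) :
    (0 : ℝ) ∈ {r : ℝ | ∃ x : X, P x = 0 ∧ ‖x‖ ≤ 1 ∧ r = ‖S x‖} :=
  ⟨0, by simp, by simp, by simp⟩

lemma dob_bddAbove (P S : X →L[ℂ] X) :
    BddAbove {r : ℝ | ∃ x : X, P x = 0 ∧ ‖x‖ ≤ 1 ∧ r = ‖S x‖} := by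
  refine ⟨‖S‖, fun r hr => ?_⟩
  obtain ⟨x, -, hx1, rfl⟩ := hr
  calc ‖S x‖ ≤ ‖S‖ * ‖x‖ := S.le_opNorm x
  _ ≤ ‖S‖ * 1 := by
        exact mul_le_mul_of_nonneg_left hx1 (norm_nonneg S)
  _ = ‖S‖ := mul_one _

lemma dob_nonneg (P S : X →L[ℂ] X) : 0 ≤ dobrushinCoeff P S :=
  le_csSup (dob_bddAbove P S) (dob_zero_mem P S)

lemma dob_le (P S : X →L[ℂ] X) {b : ℝ}
    (hb : ∀ x : X, P x = 0 → ‖x‖ ≤ 1 → ‖S x‖ ≤ b) : dobrushinCoeff P S ≤ b := by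
  refine csSup_le ⟨0, dob_zero_mem P S⟩ ?_
  rintro r ⟨x, hx0, hx1, rfl⟩
  exact hb x hx0 hx1

lemma dob_apply_le (P S : X →L[ℂ] X) {x : X} (hx : P x = 0) :
    ‖S x‖ ≤ dobrushinCoeff P S * ‖x‖ := by
  rcases eq_or_ne x 0 with rfl | hx0
  · simp
  · have hxn : (0 : ℝ) < ‖x‖ := norm_pos_iff.mpr hx0
    set y : X := ((‖x‖ : ℂ))⁻¹ • x with hy
    have hPy : P y = 0 := by simp [hy, map_smul, hx]
    have hyn : ‖y‖ = 1 := by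
      simp [hy, norm_smul, hxn.ne']
    have h1 : ‖S y‖ ≤ dobrushinCoeff P S :=
      le_csSup (dob_bddAbove P S) ⟨y, hPy, le_of_eq hyn, rfl⟩
    have h2 : ‖S y‖ = ‖x‖⁻¹ * ‖S x‖ := by
      simp [hy, map_smul, norm_smul]
    rw [h2] at h1
    calc ‖S x‖ = ‖x‖ * (‖x‖⁻¹ * ‖S x‖) := by field_simp
    _ ≤ ‖x‖ * dobrushinCoeff P S := by
          exact mul_le_mul_of_nonneg_left h1 (le_of_lt hxn)
    _ = dobrushinCoeff P S * ‖x‖ := mul_comm _ _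

lemma dob_mul (P S S' : X →L[ℂ] X) (hPS' : P * S' = P) :
    dobrushinCoeff P (S * S') ≤ dobrushinCoeff P S * dobrushinCoeff P S' := by
  refine dob_le P _ fun x hx0 hx1 => ?_
  have hS'x : P (S' x) = 0 := by
    have := congrArg (fun f : X →L[ℂ] X => f x) hPS'
    simpa [ContinuousLinearMap.mul_apply, hx0] using this
  calc ‖(S * S') x‖ = ‖S (S' x)‖ := by rw [ContinuousLinearMap.mul_apply]
  _ ≤ dobrushinCoeff P S * ‖S' x‖ := dob_apply_le P S hS'x
  _ ≤ dobrushinCoeff P S * (dobrushinCoeff P S' * ‖x‖) :=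
        mul_le_mul_of_nonneg_left (dob_apply_le P S' hx0) (dob_nonneg P S)
  _ ≤ dobrushinCoeff P S * (dobrushinCoeff P S' * 1) := by
        have := mul_le_mul_of_nonneg_left hx1 (dob_nonneg P S')
        exact mul_le_mul_of_nonneg_left this (dob_nonneg P S)
  _ = dobrushinCoeff P S * dobrushinCoeff P S' := by ring

lemma P_mul_pow (P T : X →L[ℂ] X) (hPT : P * T = P) (n : ℕ) : P * T ^ n = P := by
  induction n with
  | zero => simp
  | succ n ih => rw [pow_succ, ← mul_assoc, ih, hPT]

lemma pow_mul_P (P T : X →L[ℂ] X) (hTP : T * P = P) (n : ℕ) : T ^ n * P = P := by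
  induction n with
  | zero => simp
  | succ n ih => rw [pow_succ, mul_assoc, hTP, ih]

lemma dob_pow_le (P T : X →L[ℂ] X) (hPT : P * T = P) (n : ℕ) :
    dobrushinCoeff P (T ^ n) ≤ (dobrushinCoeff P T) ^ n := by
  induction n with
  | zero =>
      simpa using dob_le P (1 : X →L[ℂ] X) (fun x _ hx1 => by simpa using hx1)
  | succ n ih =>
      calc dobrushinCoeff P (T ^ (n + 1)) = dobrushinCoeff P (T ^ n * T) := by
            rw [pow_succ]
      _ ≤ dobrushinCoeff P (T ^ n) * dobrushinCoeff P T := dob_mul P _ _ hPT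
      _ ≤ (dobrushinCoeff P T) ^ n * dobrushinCoeff P T :=
            mul_le_mul_of_nonneg_right ih (dob_nonneg P T)
      _ = (dobrushinCoeff P T) ^ (n + 1) := (pow_succ _ _).symm

lemma dob_le_norm_sub (P S : X →L[ℂ] X) : dobrushinCoeff P S ≤ ‖S - P‖ := by
  refine dob_le P S fun x hx0 hx1 => ?_
  have h : S x = (S - P) x := by simp [hx0]
  calc ‖S x‖ = ‖(S - P) x‖ := by rw [h]
  _ ≤ ‖S - P‖ * ‖x‖ := (S - P).le_opNorm x
  _ ≤ ‖S - P‖ * 1 := mul_le_mul_of_nonneg_left hx1 (norm_nonneg _)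
  _ = ‖S - P‖ := mul_one _

lemma norm_sub_le_two_mul_dob (P S : X →L[ℂ] X) (hPnorm : ‖P‖ ≤ 1)
    (hProj : P * P = P) (hSP : S * P = P) : ‖S - P‖ ≤ 2 * dobrushinCoeff P S := by
  refine ContinuousLinearMap.opNorm_le_bound _
    (mul_nonneg (by norm_num) (dob_nonneg P S)) fun x => ?_
  have hker : P (x - P x) = 0 := by
    have := congrArg (fun f : X →L[ℂ] X => f x) hProj
    simp only [ContinuousLinearMap.mul_apply] at this
    simp [map_sub, this]
  have hval : (S - P) x = S (x - P x) := by
    have := congrArg (fun f : X →L[ℂ] X => f x) hSP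
    simp only [ContinuousLinearMap.mul_apply] at this
    simp [map_sub, this]
  have hnx : ‖x - P x‖ ≤ 2 * ‖x‖ := by
    calc ‖x - P x‖ ≤ ‖x‖ + ‖P x‖ := norm_sub_le _ _
    _ ≤ ‖x‖ + ‖P‖ * ‖x‖ := by linarith [P.le_opNorm x]
    _ ≤ ‖x‖ + 1 * ‖x‖ := by
          have := mul_le_mul_of_nonneg_right hPnorm (norm_nonneg x)
          linarith
    _ = 2 * ‖x‖ := by ring
  calc ‖(S - P) x‖ = ‖S (x - P x)‖ := by rw [hval]
  _ ≤ dobrushinCoeff P S * ‖x - P x‖ := dob_apply_le P S hker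
  _ ≤ dobrushinCoeff P S * (2 * ‖x‖) :=
        mul_le_mul_of_nonneg_left hnx (dob_nonneg P S)
  _ = 2 * dobrushinCoeff P S * ‖x‖ := by ring

lemma sub_pow_eq (P T : X →L[ℂ] X) (hProj : P * P = P) (hPT : P * T = P)
    (hTP : T * P = P) (n : ℕ) (hn : 1 ≤ n) : (T - P) ^ n = T ^ n - P := by
  induction n, hn using Nat.le_induction with
  | base => simp
  | succ n hn ih =>
      have h1 : T ^ n * P = P := pow_mul_P P T hTP n
      calc (T - P) ^ (n + 1) = (T - P) ^ n * (T - P) := pow_succ _ _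
      _ = (T ^ n - P) * (T - P) := by rw [ih]
      _ = T ^ n * T - T ^ n * P - (P * T - P * P) := by
            rw [sub_mul, mul_sub, mul_sub]
      _ = T ^ (n + 1) - P - (P - P) := by rw [← pow_succ, h1, hPT, hProj]
      _ = T ^ (n + 1) - P := by abel

end Aux

section Spectral

variable {X : Type*} [NormedAddCommGroup X] [NormedSpace ℂ X] [CompleteSpace X]

/-- Real-valued Gelfand formula. -/
lemma gelfand_real (A : X →L[ℂ] X) :
    Tendsto (fun m : ℕ => ‖A ^ m‖ ^ (1 / (m : ℝ))) atTop
      (𝓝 ((spectralRadius ℂ A).toReal)) := by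
  have hfin : spectralRadius ℂ A ≠ ⊤ := by
    refine ne_top_of_le_ne_top ?_ (spectrum.spectralRadius_le_pow_nnnorm_pow_one_div ℂ A 0)
    exact ENNReal.mul_ne_top
      (ENNReal.rpow_ne_top_of_nonneg (by norm_num) ENNReal.coe_ne_top)
      (ENNReal.rpow_ne_top_of_nonneg (by norm_num) ENNReal.coe_ne_top)
  have h := spectrum.pow_norm_pow_one_div_tendsto_nhds_spectralRadius A
  have h2 := (ENNReal.tendsto_toReal hfin).comp h
  convert h2 using 2 with m
  rw [Function.comp_apply, ENNReal.toReal_ofReal]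
  positivity

/-- If `‖A ^ (n k)‖ ≤ 2 c ^ k` for every `k ≥ 1`, then `r(A)^n ≤ c`. -/
lemma radius_pow_le (A : X →L[ℂ] X) (n : ℕ) (hn : 1 ≤ n) (c : ℝ) (hc : 0 ≤ c)
    (h : ∀ k : ℕ, 1 ≤ k → ‖A ^ (n * k)‖ ≤ 2 * c ^ k) :
    (spectralRadius ℂ A).toReal ^ n ≤ c := by
  set L := (spectralRadius ℂ A).toReal with hL
  have hL0 : 0 ≤ L := ENNReal.toReal_nonneg
  -- the subsequence `m = n * (k + 1)` of Gelfand's formula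
  have hsub : Tendsto (fun k : ℕ => n * (k + 1)) atTop atTop := by
    refine tendsto_atTop_mono (f := id) (fun k => ?_) tendsto_id
    calc k ≤ k + 1 := Nat.le_succ k
    _ ≤ n * (k + 1) := Nat.le_mul_of_pos_left _ hn
  have hGel : Tendsto (fun k : ℕ => ‖A ^ (n * (k + 1))‖ ^ (1 / ((n * (k + 1) : ℕ) : ℝ)))
      atTop (𝓝 L) := (gelfand_real A).comp hsub
  -- the exponents tend to `0`
  have hexp : Tendsto (fun k : ℕ => (1 / ((n * (k + 1) : ℕ) : ℝ))) atTop (𝓝 0) := by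
    simp only [one_div]
    exact tendsto_inv_atTop_zero.comp (tendsto_natCast_atTop_atTop.comp hsub)
  -- the dominating sequence tends to `c ^ (1/n)`
  have hdom : Tendsto
      (fun k : ℕ => (2 : ℝ) ^ (1 / ((n * (k + 1) : ℕ) : ℝ)) * c ^ (1 / (n : ℝ)))
      atTop (𝓝 (c ^ (1 / (n : ℝ)))) := by
    have h2 : Tendsto (fun k : ℕ => (2 : ℝ) ^ (1 / ((n * (k + 1) : ℕ) : ℝ))) atTop
        (𝓝 1) := by
      have := (tendsto_const_nhds (x := (2 : ℝ)) (f := atTop (α := ℕ))).rpow hexp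
        (Or.inl (by norm_num))
      simpa using this
    simpa using h2.mul_const (c ^ (1 / (n : ℝ)))
  -- termwise comparison
  have hcmp : ∀ k : ℕ, ‖A ^ (n * (k + 1))‖ ^ (1 / ((n * (k + 1) : ℕ) : ℝ)) ≤
      (2 : ℝ) ^ (1 / ((n * (k + 1) : ℕ) : ℝ)) * c ^ (1 / (n : ℝ)) := by
    intro k
    have hnk : (0 : ℝ) < ((n * (k + 1) : ℕ) : ℝ) := by
      have : 0 < n * (k + 1) := Nat.mul_pos hn k.succ_pos
      exact_mod_cast this
    have hbound := h (k + 1) (Nat.le_add_left 1 k)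
    have hstep : ‖A ^ (n * (k + 1))‖ ^ (1 / ((n * (k + 1) : ℕ) : ℝ)) ≤
        (2 * c ^ (k + 1)) ^ (1 / ((n * (k + 1) : ℕ) : ℝ)) :=
      Real.rpow_le_rpow (norm_nonneg _) hbound (by positivity)
    refine hstep.trans (le_of_eq ?_)
    rw [Real.mul_rpow (by norm_num) (by positivity)]
    congr 1
    rw [← Real.rpow_natCast c (k + 1), ← Real.rpow_mul hc]
    congr 1
    have hk1 : ((k : ℝ) + 1) ≠ 0 := by positivity
    have hn0 : ((n : ℝ)) ≠ 0 :=
      Nat.cast_ne_zero.mpr (Nat.one_le_iff_ne_zero.mp hn)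
    push_cast
    field_simp
  have hle : L ≤ c ^ (1 / (n : ℝ)) := le_of_tendsto_of_tendsto' hGel hdom hcmp
  have hfinal : L ^ n ≤ (c ^ (1 / (n : ℝ))) ^ n := pow_le_pow_left₀ hL0 hle n
  refine hfinal.trans (le_of_eq ?_)
  rw [← Real.rpow_natCast (c ^ (1 / (n : ℝ))) n, ← Real.rpow_mul hc]
  have hn0 : ((n : ℝ)) ≠ 0 := Nat.cast_ne_zero.mpr (Nat.one_le_iff_ne_zero.mp hn)
  rw [one_div, inv_mul_cancel₀ hn0, Real.rpow_one]

/-- If `c ^ k ≤ ‖A ^ k‖` for every `k ≥ 1`, then `c ≤ r(A)`. -/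
lemma le_radius (A : X →L[ℂ] X) (c : ℝ) (hc : 0 ≤ c)
    (h : ∀ k : ℕ, 1 ≤ k → c ^ k ≤ ‖A ^ k‖) :
    c ≤ (spectralRadius ℂ A).toReal := by
  refine ge_of_tendsto (gelfand_real A) ?_
  filter_upwards [eventually_ge_atTop 1] with k hk
  have hk0 : ((k : ℝ)) ≠ 0 :=
    Nat.cast_ne_zero.mpr (Nat.one_le_iff_ne_zero.mp hk)
  have := Real.rpow_le_rpow (pow_nonneg hc k) (h k hk) (by positivity : (0:ℝ) ≤ 1 / (k:ℝ))
  calc c = (c ^ k) ^ (1 / (k : ℝ)) := by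
        rw [← Real.rpow_natCast c k, ← Real.rpow_mul hc, mul_one_div,
          div_self hk0, Real.rpow_one]
  _ ≤ ‖A ^ k‖ ^ (1 / (k : ℝ)) := this

end Spectral

theorem stmt4 {X : Type*} [NormedAddCommGroup X] [NormedSpace ℂ X] [CompleteSpace X]
    (T P : X →L[ℂ] X) (hT : ‖T‖ ≤ 1) (hPnorm : ‖P‖ ≤ 1)
    (hProj : P.comp P = P) (hPT : P.comp T = P) (hTP : T.comp P = P)
    (hErg : Tendsto (fun n : ℕ => ‖T ^ n - P‖) atTop (𝓝 0)) :
    dobrushinCoeff P T = (spectralRadius ℂ (T - P)).toReal ↔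
      ∀ n : ℕ, 1 ≤ n → dobrushinCoeff P (T ^ n) = (dobrushinCoeff P T) ^ n := by
  have hProj' : P * P = P := hProj
  have hPT' : P * T = P := hPT
  have hTP' : T * P = P := hTP
  have hsub := sub_pow_eq P T hProj' hPT' hTP'
  constructor
  · -- forward direction
    intro hD n hn
    refine le_antisymm (dob_pow_le P T hPT' n) ?_
    have hPTn : P * T ^ n = P := P_mul_pow P T hPT' n
    have hkey : (spectralRadius ℂ (T - P)).toReal ^ n ≤ dobrushinCoeff P (T ^ n) := by
      refine radius_pow_le (T - P) n hn _ (dob_nonneg P _) fun k hk => ?_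
      have hnk1 : 1 ≤ n * k := Nat.one_le_iff_ne_zero.mpr
        (Nat.mul_ne_zero (Nat.one_le_iff_ne_zero.mp hn) (Nat.one_le_iff_ne_zero.mp hk))
      have hTnkP : T ^ (n * k) * P = P := pow_mul_P P T hTP' (n * k)
      calc ‖(T - P) ^ (n * k)‖ = ‖T ^ (n * k) - P‖ := by rw [hsub (n * k) hnk1]
      _ ≤ 2 * dobrushinCoeff P (T ^ (n * k)) :=
            norm_sub_le_two_mul_dob P _ hPnorm hProj' hTnkP
      _ = 2 * dobrushinCoeff P ((T ^ n) ^ k) := by rw [pow_mul]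
      _ ≤ 2 * dobrushinCoeff P (T ^ n) ^ k := by
            have := dob_pow_le P (T ^ n) hPTn k
            linarith
    calc (dobrushinCoeff P T) ^ n = (spectralRadius ℂ (T - P)).toReal ^ n := by rw [hD]
    _ ≤ dobrushinCoeff P (T ^ n) := hkey
  · -- backward direction
    intro hMul
    refine le_antisymm ?_ ?_
    · -- `δ ≤ r` using multiplicativity
      refine le_radius (T - P) _ (dob_nonneg P T) fun k hk => ?_
      calc (dobrushinCoeff P T) ^ k = dobrushinCoeff P (T ^ k) := (hMul k hk).symm
      _ ≤ ‖T ^ k - P‖ := dob_le_norm_sub P _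
      _ = ‖(T - P) ^ k‖ := by rw [hsub k hk]
    · -- `r ≤ δ` always
      have := radius_pow_le (T - P) 1 le_rfl (dobrushinCoeff P T) (dob_nonneg P T)
        (fun k hk => ?_)
      · simpa using this
      · have hTkP : T ^ k * P = P := pow_mul_P P T hTP' k
        calc ‖(T - P) ^ (1 * k)‖ = ‖T ^ k - P‖ := by rw [one_mul, hsub k hk]
        _ ≤ 2 * dobrushinCoeff P (T ^ k) :=
              norm_sub_le_two_mul_dob P _ hPnorm hProj' hTkP
        _ ≤ 2 * dobrushinCoeff P T ^ k := by
              have := dob_pow_le P T hPT' k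
              linarith
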